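/- (Pseudoscalar square in general dimension.) For every n ≥ 1, in the conformal geometric algebra CGAₙ the pseudoscalar Iₙ := ((…((ι(e₀) ∧ e₁) ∧ e₂) … ∧ eₙ) ∧ e∞) satisfies Iₙ² = (−1)^{n(n−1)/2}; consequently Iₙ⁻¹ = (−1)^{n(n−1)/2} Iₙ. -/

import Mathlib

open CliffordAlgebra

/-- The matrix of the CGA inner product on `Vₙ = ℝ^{n+2}`; index `0` corresponds to
`e₀`, indices `1, …, n` to the orthonormal `e₁, …, eₙ`, and index `n+1` to `e∞`. -/
def BmatN (n : ℕ) : Matrix (Fin (n + 2)) (Fin (n + 2)) ℝ := fun i j =>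
  if (i = 0 ∧ j = Fin.last (n + 1)) ∨ (i = Fin.last (n + 1) ∧ j = 0) then -1
  else if i = j ∧ i ≠ 0 ∧ i ≠ Fin.last (n + 1) then 1
  else 0

/-- The CGA quadratic form `Qₙ(a e₀ + Σᵢ xᵢeᵢ + b e∞) = Σᵢ xᵢ² − 2ab` on `ℝ^{n+2}`. -/
noncomputable def Qn (n : ℕ) : QuadraticForm ℝ (Fin (n + 2) → ℝ) := (BmatN n).toQuadraticMap'

/-- Outer (wedge) product of a multivector with a vector:
`A ∧ v := ½ (A ι(v) + ι(v) α(A))`, where `α` is the grade involution. -/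
noncomputable def wedgeVecN {n : ℕ} (A : CliffordAlgebra (Qn n)) (v : Fin (n + 2) → ℝ) :
    CliffordAlgebra (Qn n) :=
  (1 / 2 : ℝ) • (A * ι (Qn n) v + ι (Qn n) v * involute A)

/-- The pseudoscalar `Iₙ = ((…((e₀ ∧ e₁) ∧ e₂) … ∧ eₙ) ∧ e∞)` of `CGAₙ`. -/
noncomputable def In (n : ℕ) : CliffordAlgebra (Qn n) :=
  wedgeVecN
    ((List.finRange n).foldl
      (fun A i => wedgeVecN A (Pi.single (Fin.castSucc i.succ) 1))
      (ι (Qn n) (Pi.single 0 1)))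
    (Pi.single (Fin.last (n + 1)) 1)

namespace InSqAux
variable {n : ℕ}

noncomputable def ee (n : ℕ) (i : Fin (n+2)) : CliffordAlgebra (Qn n) :=
  ι (Qn n) (Pi.single i 1)

lemma Qn_single (i : Fin (n+2)) : Qn n (Pi.single i 1) = BmatN n i i := by
  simp [Qn, Matrix.toQuadraticMap', Matrix.toQuadraticForm', LinearMap.BilinMap.toQuadraticMap_apply,
    Matrix.toLinearMap₂'_apply, Pi.single_apply]

lemma Qn_polar (i j : Fin (n+2)) :
    QuadraticMap.polar (Qn n) (Pi.single i 1) (Pi.single j 1) = BmatN n i j + BmatN n j i := by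
  simp [Qn, Matrix.toQuadraticMap', Matrix.toQuadraticForm', LinearMap.BilinMap.polar_toQuadraticMap,
    Matrix.toLinearMap₂'_apply, Pi.single_apply]

lemma last_ne_zero : (Fin.last (n+1) : Fin (n+2)) ≠ 0 := by
  simp [Fin.ext_iff]

lemma ee_sq_mid {i : Fin (n+2)} (h0 : i ≠ 0) (hl : i ≠ Fin.last (n+1)) :
    ee n i * ee n i = 1 := by
  rw [ee, ι_sq_scalar, Qn_single]
  have : BmatN n i i = 1 := by
    simp [BmatN, h0, hl]
  rw [this, map_one]

lemma ee_sq_zero : ee n 0 * ee n 0 = 0 := by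
  rw [ee, ι_sq_scalar, Qn_single]
  have : BmatN n 0 0 = 0 := by
    simp [BmatN, last_ne_zero.symm, last_ne_zero]
  rw [this, map_zero]

lemma ee_sq_last : ee n (Fin.last (n+1)) * ee n (Fin.last (n+1)) = 0 := by
  rw [ee, ι_sq_scalar, Qn_single]
  have : BmatN n (Fin.last (n+1)) (Fin.last (n+1)) = 0 := by
    simp [BmatN, last_ne_zero.symm, last_ne_zero]
  rw [this, map_zero]

lemma ee_anti {i j : Fin (n+2)} (hij : i ≠ j)
    (h1 : ¬(i = 0 ∧ j = Fin.last (n+1))) (h2 : ¬(i = Fin.last (n+1) ∧ j = 0)) :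
    ee n i * ee n j = -(ee n j * ee n i) := by
  have h := ι_mul_ι_add_swap (Q := Qn n) (Pi.single i 1) (Pi.single j 1)
  rw [Qn_polar] at h
  have hB : BmatN n i j + BmatN n j i = 0 := by
    have e1 : BmatN n i j = 0 := by simp [BmatN, h1, h2, hij]
    have e2 : BmatN n j i = 0 := by
      simp only [BmatN]
      rw [if_neg, if_neg]
      · rintro ⟨hji, -⟩; exact hij hji.symm
      · rintro (⟨a, b⟩ | ⟨a, b⟩)
        · exact h2 ⟨b, a⟩
        · exact h1 ⟨b, a⟩
    rw [e1, e2, add_zero]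
  rw [hB, map_zero] at h
  rw [ee, ee]
  exact eq_neg_of_add_eq_zero_left h

lemma ee_zl : ee n 0 * ee n (Fin.last (n+1)) + ee n (Fin.last (n+1)) * ee n 0
    = algebraMap ℝ _ (-2) := by
  have h := ι_mul_ι_add_swap (Q := Qn n) (Pi.single (0 : Fin (n+2)) 1)
    (Pi.single (Fin.last (n+1)) 1)
  rw [Qn_polar] at h
  have hB : BmatN n 0 (Fin.last (n+1)) + BmatN n (Fin.last (n+1)) 0 = (-2 : ℝ) := by
    simp [BmatN]; norm_num
  rw [hB] at h
  exact h

lemma tri (k : ℕ) : (k+1)*k/2 = k + k*(k-1)/2 := by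
  have h1 : (k+1)*k/2 = (k+1).choose 2 := by
    rw [Nat.choose_two_right]; simp
  have h2 : k*(k-1)/2 = k.choose 2 := by rw [Nat.choose_two_right]
  rw [h1, h2, Nat.choose_succ_succ, Nat.choose_one_right]

lemma swap_prod (l : List (Fin (n+2))) (j : Fin (n+2))
    (h : ∀ i ∈ l, ee n j * ee n i = -(ee n i * ee n j)) :
    ee n j * (l.map (ee n)).prod = ((-1:ℝ)^l.length) • ((l.map (ee n)).prod * ee n j) := by
  induction l with
  | nil => simp
  | cons a t ih =>
    have ha := h a List.mem_cons_self
    have iht := ih (fun i hi => h i (List.mem_cons_of_mem a hi))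
    simp only [List.map_cons, List.prod_cons, List.length_cons]
    calc ee n j * (ee n a * (t.map (ee n)).prod)
        = (ee n j * ee n a) * (t.map (ee n)).prod := by rw [mul_assoc]
      _ = -(ee n a * (ee n j * (t.map (ee n)).prod)) := by rw [ha]; simp [mul_assoc]
      _ = -(ee n a * (((-1:ℝ)^t.length) • ((t.map (ee n)).prod * ee n j))) := by rw [iht]
      _ = ((-1:ℝ)^(t.length+1)) • (ee n a * (t.map (ee n)).prod * ee n j) := by
          rw [mul_smul_comm, ← smul_neg, pow_succ]
          rw [mul_comm ((-1:ℝ)^t.length) (-1), mul_smul]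
          simp [mul_assoc]

lemma invol_prod (l : List (Fin (n+2))) :
    involute ((l.map (ee n)).prod) = ((-1:ℝ)^l.length) • (l.map (ee n)).prod := by
  induction l with
  | nil => simp
  | cons a t ih =>
    simp only [List.map_cons, List.prod_cons, List.length_cons, map_mul]
    rw [ih, ee, involute_ι, pow_succ, mul_comm ((-1:ℝ)^t.length) (-1), mul_smul]
    simp [mul_smul_comm, ee]

lemma prod_sq (l : List (Fin (n+2))) (hm : ∀ i ∈ l, i ≠ 0 ∧ i ≠ Fin.last (n+1))
    (hnd : l.Nodup) :
    (l.map (ee n)).prod * (l.map (ee n)).prod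
      = ((-1:ℝ)^(l.length*(l.length-1)/2)) • 1 := by
  induction l with
  | nil => simp
  | cons a t ih =>
    obtain ⟨ha, hat⟩ := List.nodup_cons.mp hnd
    have hma := hm a List.mem_cons_self
    have hmt : ∀ i ∈ t, i ≠ 0 ∧ i ≠ Fin.last (n+1) :=
      fun i hi => hm i (List.mem_cons_of_mem a hi)
    have iht := ih hmt hat
    have hsw : ee n a * (t.map (ee n)).prod
        = ((-1:ℝ)^t.length) • ((t.map (ee n)).prod * ee n a) := by
      refine swap_prod t a (fun i hi => ?_)
      obtain ⟨hi0, hil⟩ := hmt i hi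
      exact ee_anti (fun hc => ha (hc ▸ hi)) (fun hc => hma.1 hc.1) (fun hc => hma.2 hc.1)
    have hswap : (t.map (ee n)).prod * ee n a
        = ((-1:ℝ)^t.length) • (ee n a * (t.map (ee n)).prod) := by
      rw [hsw, smul_smul, ← pow_add]
      have : (-1:ℝ)^(t.length + t.length) = 1 := by
        rw [← two_mul]; exact (neg_one_pow_eq_one_iff_even (by norm_num)).2 (even_two_mul _)
      rw [this, one_smul]
    simp only [List.map_cons, List.prod_cons, List.length_cons]
    calc ee n a * (t.map (ee n)).prod * (ee n a * (t.map (ee n)).prod)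
        = ee n a * (((t.map (ee n)).prod * ee n a) * (t.map (ee n)).prod) := by
          simp [mul_assoc]
      _ = ((-1:ℝ)^t.length) • (ee n a * (ee n a * (t.map (ee n)).prod * (t.map (ee n)).prod)) := by
          rw [hswap]; simp [mul_assoc, smul_mul_assoc, mul_smul_comm]
      _ = ((-1:ℝ)^t.length) • (((-1:ℝ)^(t.length*(t.length-1)/2)) • 1) := by
          rw [mul_assoc, iht, ← mul_assoc, ee_sq_mid hma.1 hma.2, one_mul]
      _ = ((-1:ℝ)^((t.length+1)*t.length/2)) • 1 := by
          rw [smul_smul, ← pow_add, tri]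

lemma foldl_mul (l : List (Fin (n+2))) :
    ∀ A : CliffordAlgebra (Qn n),
      l.foldl (fun A i => A * ee n i) A = A * (l.map (ee n)).prod := by
  induction l with
  | nil => intro A; simp
  | cons a t ih => intro A; simp only [List.foldl_cons, List.map_cons, List.prod_cons, ih,
      mul_assoc]

lemma invol_ee (i : Fin (n+2)) : involute (ee n i) = -(ee n i) := by
  rw [ee, involute_ι]

lemma half_double (x : CliffordAlgebra (Qn n)) : (1/2 : ℝ) • (x + x) = x := by
  rw [← two_smul ℝ x, smul_smul]; norm_num

lemma foldl_wedge (l : List (Fin (n+2))) (hm : ∀ i ∈ l, i ≠ 0 ∧ i ≠ Fin.last (n+1))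
    (hnd : l.Nodup) :
    ∀ A : CliffordAlgebra (Qn n), (∀ j ∈ l, ee n j * involute A = A * ee n j) →
      l.foldl (fun A i => wedgeVecN A (Pi.single i 1)) A = A * (l.map (ee n)).prod := by
  induction l with
  | nil => intro A _; simp
  | cons a t ih =>
    intro A hA
    obtain ⟨ha, hat⟩ := List.nodup_cons.mp hnd
    have hma := hm a List.mem_cons_self
    have hmt : ∀ i ∈ t, i ≠ 0 ∧ i ≠ Fin.last (n+1) :=
      fun i hi => hm i (List.mem_cons_of_mem a hi)
    have hw : wedgeVecN A (Pi.single a 1) = A * ee n a := by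
      rw [wedgeVecN, ← ee, hA a List.mem_cons_self, half_double]
    have hA' : ∀ j ∈ t, ee n j * involute (A * ee n a) = (A * ee n a) * ee n j := by
      intro j hj
      have hanti : ee n j * ee n a = -(ee n a * ee n j) := by
        obtain ⟨hj0, hjl⟩ := hmt j hj
        exact ee_anti (fun hc => ha (hc ▸ hj)) (fun hc => hj0 hc.1) (fun hc => hjl hc.1)
      rw [map_mul, invol_ee, mul_neg, mul_neg, ← mul_assoc,
        hA j (List.mem_cons_of_mem a hj), mul_assoc, hanti, mul_neg, neg_neg, ← mul_assoc]
    simp only [List.foldl_cons, hw, List.map_cons, List.prod_cons]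
    rw [ih hmt hat (A * ee n a) hA', mul_assoc]

def mids (n : ℕ) : List (Fin (n+2)) :=
  (List.finRange n).map (fun i : Fin n => (Fin.castSucc i.succ : Fin (n+2)))

lemma mids_length : (mids n).length = n := by simp [mids]

lemma mids_mid : ∀ i ∈ mids n, i ≠ 0 ∧ i ≠ Fin.last (n+1) := by
  intro i hi
  simp only [mids, List.mem_map] at hi
  obtain ⟨j, -, rfl⟩ := hi
  constructor
  · simp only [Ne, Fin.ext_iff, Fin.coe_castSucc, Fin.val_succ, Fin.val_zero]
    omega
  · simp only [Ne, Fin.ext_iff, Fin.coe_castSucc, Fin.val_succ, Fin.val_last]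
    omega

lemma mids_nodup : (mids n).Nodup := by
  refine List.Nodup.map ?_ (List.nodup_finRange n)
  intro a b h
  simpa [Fin.ext_iff] using h

lemma In_eq (n : ℕ) :
    In n = wedgeVecN (ee n 0 * ((mids n).map (ee n)).prod)
      (Pi.single (Fin.last (n+1)) 1) := by
  rw [In]
  congr 1
  rw [show (List.finRange n).foldl
      (fun A i => wedgeVecN A (Pi.single (Fin.castSucc i.succ) 1))
      (ι (Qn n) (Pi.single 0 1))
    = (mids n).foldl (fun A i => wedgeVecN A (Pi.single i 1)) (ee n 0) by
      rw [mids, List.foldl_map]; rfl]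
  refine foldl_wedge (mids n) mids_mid mids_nodup (ee n 0) ?_
  intro j hj
  obtain ⟨hj0, hjl⟩ := mids_mid j hj
  have hanti : ee n j * ee n 0 = -(ee n 0 * ee n j) :=
    ee_anti hj0 (fun hc => hj0 hc.1) (fun hc => hjl hc.1)
  rw [invol_ee, mul_neg, hanti, neg_neg]

lemma neg_one_pow_self_mul (k : ℕ) : ((-1:ℝ)^k) * ((-1:ℝ)^k) = 1 := by
  rw [← pow_add, ← two_mul]
  exact (neg_one_pow_eq_one_iff_even (by norm_num)).2 (even_two_mul _)

section Assemble
variable (n : ℕ)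

noncomputable def Ep : CliffordAlgebra (Qn n) := ((mids n).map (ee n)).prod
noncomputable def c0 : CliffordAlgebra (Qn n) := ee n 0
noncomputable def ci : CliffordAlgebra (Qn n) := ee n (Fin.last (n+1))

lemma swapE0 : c0 n * Ep n = ((-1:ℝ)^n) • (Ep n * c0 n) := by
  have := swap_prod (n := n) (mids n) 0 ?_
  · rwa [mids_length] at this
  · intro i hi
    obtain ⟨hi0, hil⟩ := mids_mid i hi
    exact ee_anti (fun hc => hi0 hc.symm) (fun hc => hil hc.2) (fun hc => last_ne_zero hc.1.symm)

lemma swapEl : ci n * Ep n = ((-1:ℝ)^n) • (Ep n * ci n) := by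
  have := swap_prod (n := n) (mids n) (Fin.last (n+1)) ?_
  · rwa [mids_length] at this
  · intro i hi
    obtain ⟨hi0, hil⟩ := mids_mid i hi
    exact ee_anti (fun hc => hil hc.symm) (fun hc => last_ne_zero hc.1) (fun hc => hi0 hc.2)

lemma swapE0' : Ep n * c0 n = ((-1:ℝ)^n) • (c0 n * Ep n) := by
  rw [swapE0, smul_smul, neg_one_pow_self_mul, one_smul]

lemma swapEl' : Ep n * ci n = ((-1:ℝ)^n) • (ci n * Ep n) := by
  rw [swapEl, smul_smul, neg_one_pow_self_mul, one_smul]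

lemma involE : involute (Ep n) = ((-1:ℝ)^n) • Ep n := by
  have := invol_prod (n := n) (mids n)
  rwa [mids_length] at this

lemma Esq : Ep n * Ep n = ((-1:ℝ)^(n*(n-1)/2)) • 1 := by
  have := prod_sq (n := n) (mids n) mids_mid mids_nodup
  rwa [mids_length] at this

lemma cicz : ci n * c0 n = algebraMap ℝ _ (-2) - c0 n * ci n :=
  eq_sub_of_add_eq' (ee_zl)

lemma In_formula : In n = ((-1:ℝ)^n) • ((c0 n * ci n + 1) * Ep n) := by
  rw [In_eq, wedgeVecN, ← ee, ← ci, ← c0, ← Ep]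
  have h1 : (c0 n * Ep n) * ci n = ((-1:ℝ)^n) • (c0 n * ci n * Ep n) := by
    rw [mul_assoc, swapEl', mul_smul_comm, ← mul_assoc]
  have hic0 : involute (c0 n) = -(c0 n) := invol_ee 0
  have h2 : ci n * involute (c0 n * Ep n)
      = -(((-1:ℝ)^n) • (ci n * (c0 n * Ep n))) := by
    rw [map_mul, hic0, involE, neg_mul, mul_smul_comm, mul_neg, mul_smul_comm]
  have h3 : ci n * (c0 n * Ep n) = ((-2:ℝ)) • Ep n - c0 n * ci n * Ep n := by
    rw [← mul_assoc, cicz, sub_mul, ← Algebra.smul_def]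
  rw [h1, h2, h3, add_mul, one_mul]
  module

lemma EGcomm : Ep n * (c0 n * ci n) = (c0 n * ci n) * Ep n := by
  rw [← mul_assoc, swapE0', smul_mul_assoc, mul_assoc, swapEl', mul_smul_comm,
    smul_smul, neg_one_pow_self_mul, one_smul, ← mul_assoc]

lemma Gsq : (c0 n * ci n + 1) * (c0 n * ci n + 1) = 1 := by
  have hG : (c0 n * ci n) * (c0 n * ci n) = (-2:ℝ) • (c0 n * ci n) := by
    rw [mul_assoc, ← mul_assoc (ci n), cicz, sub_mul, mul_assoc (c0 n) (ci n) (ci n),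
      show ci n * ci n = 0 from ee_sq_last, mul_zero, sub_zero,
      ← Algebra.smul_def, mul_smul_comm]
  rw [add_mul, mul_add, mul_add, one_mul, mul_one, hG, one_mul]
  module

lemma In_mul_In : In n * In n = ((-1:ℝ)^(n*(n-1)/2)) • 1 := by
  have hcomm : Ep n * (c0 n * ci n + 1) = (c0 n * ci n + 1) * Ep n := by
    rw [mul_add, mul_one, add_mul, one_mul, EGcomm]
  rw [In_formula, smul_mul_assoc, mul_smul_comm, smul_smul, neg_one_pow_self_mul, one_smul]
  calc ((c0 n * ci n + 1) * Ep n) * ((c0 n * ci n + 1) * Ep n)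
      = (c0 n * ci n + 1) * ((Ep n * (c0 n * ci n + 1)) * Ep n) := by simp [mul_assoc]
    _ = (c0 n * ci n + 1) * ((c0 n * ci n + 1) * (Ep n * Ep n)) := by rw [hcomm, mul_assoc]
    _ = ((c0 n * ci n + 1) * (c0 n * ci n + 1)) * (Ep n * Ep n) := by rw [← mul_assoc]
    _ = ((-1:ℝ)^(n*(n-1)/2)) • 1 := by rw [Gsq, one_mul, Esq]

end Assemble
end InSqAux


/-- (Pseudoscalar square in general dimension.) For every `n ≥ 1`,
`Iₙ² = (−1)^{n(n−1)/2}`; consequently `Iₙ⁻¹ = (−1)^{n(n−1)/2} Iₙ`. -/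
theorem In_sq : ∀ n : ℕ, 1 ≤ n →
    In n * In n = ((-1 : ℝ) ^ (n * (n - 1) / 2)) • (1 : CliffordAlgebra (Qn n)) ∧
    In n * (((-1 : ℝ) ^ (n * (n - 1) / 2)) • In n) = 1 ∧
    (((-1 : ℝ) ^ (n * (n - 1) / 2)) • In n) * In n = 1 := by
  intro n _
  have h := InSqAux.In_mul_In n
  refine ⟨h, ?_, ?_⟩
  · rw [mul_smul_comm, h, smul_smul, InSqAux.neg_one_pow_self_mul, one_smul]
  · rw [smul_mul_assoc, h, smul_smul, InSqAux.neg_one_pow_self_mul, one_smul]
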